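/- arXiv:2407.10313 — 3 statements merged into one kernel-verified Lean document; each statement's English description precedes it below -/
import Mathlib

section
/- Let d ≥ 1 be an integer, Ω ⊆ ℝ^d a compact set, and X = {x_1,…,x_s} ⊆ [-1/2,1/2)^d a set of s distinct points, and suppose σ_min(Φ_{Ω,X}) > 0. Then for every w ∈ ℂ^s there exists f ∈ P(Ω) such that f(x_k) = w_k for all k ∈ {1,…,s}, ‖f‖_{L²(𝕋^d)} ≤ |w|₂ / σ_min(Φ_{Ω,X}), and ‖f‖_{L^∞(𝕋^d)} ≤ √(|Ω|_*) · |w|₂ / σ_min(Φ_{Ω,X}), where |Ω|_* = #(Ω ∩ ℤ^d). -/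
open MeasureTheory Finset
open scoped ENNReal Classical BigOperators

noncomputable section

namespace NF

variable {d : ℕ} {ι : Type*} [Fintype ι]

/-- ℓ^p norm on ℝ^d for p ∈ [1,∞] (encoded in ℝ≥0∞). -/
def lpnorm (p : ℝ≥0∞) (x : Fin d → ℝ) : ℝ :=
  if p = ∞ then ⨆ i, |x i| else (∑ i, |x i| ^ p.toReal) ^ (1 / p.toReal)

/-- the closed ℓ^p ball Ω_m^p. -/
def lpBall (d : ℕ) (p : ℝ≥0∞) (m : ℝ) : Set (Fin d → ℝ) := {x | lpnorm p x ≤ m}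

def dotR (ω x : Fin d → ℝ) : ℝ := ∑ i, ω i * x i

def l2norm (u : ι → ℂ) : ℝ := Real.sqrt (∑ k, ‖u k‖ ^ 2)

/-- the nonharmonic Fourier transform of u, as a function of ω. -/
def Fop (x : ι → Fin d → ℝ) (u : ι → ℂ) (ω : Fin d → ℝ) : ℂ :=
  ∑ k, u k * Complex.exp (-(2 * Real.pi * Complex.I) * (dotR ω (x k) : ℝ))

/-- its L²(Ω) norm -/
def FopNorm (Ω : Set (Fin d → ℝ)) (x : ι → Fin d → ℝ) (u : ι → ℂ) : ℝ :=
  Real.sqrt (∫ ω in Ω, ‖Fop x u ω‖ ^ 2)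

def sigmaMinF (Ω : Set (Fin d → ℝ)) (x : ι → Fin d → ℝ) : ℝ :=
  ⨅ u : {u : ι → ℂ // l2norm u = 1}, FopNorm Ω x u

def sigmaMaxF (Ω : Set (Fin d → ℝ)) (x : ι → Fin d → ℝ) : ℝ :=
  ⨆ u : {u : ι → ℂ // l2norm u = 1}, FopNorm Ω x u

def intPt (ω : Fin d → ℤ) : Fin d → ℝ := fun i => (ω i : ℝ)

/-- squared ℓ² norm of Φ_{Ω,X} u, summing over integer points of Ω. -/
def PhiSq (Ω : Set (Fin d → ℝ)) (x : ι → Fin d → ℝ) (u : ι → ℂ) : ℝ :=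
  ∑' ω : Fin d → ℤ, if intPt ω ∈ Ω then ‖Fop x u (intPt ω)‖ ^ 2 else 0

def PhiNorm (Ω : Set (Fin d → ℝ)) (x : ι → Fin d → ℝ) (u : ι → ℂ) : ℝ :=
  Real.sqrt (PhiSq Ω x u)

def sigmaMinPhi (Ω : Set (Fin d → ℝ)) (x : ι → Fin d → ℝ) : ℝ :=
  ⨅ u : {u : ι → ℂ // l2norm u = 1}, PhiNorm Ω x u

def sigmaMaxPhi (Ω : Set (Fin d → ℝ)) (x : ι → Fin d → ℝ) : ℝ :=
  ⨆ u : {u : ι → ℂ // l2norm u = 1}, PhiNorm Ω x u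

/-- torus ℓ^p distance. -/
def torusDist (p : ℝ≥0∞) (x y : Fin d → ℝ) : ℝ :=
  ⨅ n : Fin d → ℤ, lpnorm p (fun i => x i - y i + (n i : ℝ))

/-- fundamental domain [-1/2,1/2)^d of the torus. -/
def cube (d : ℕ) : Set (Fin d → ℝ) := Set.univ.pi fun _ => Set.Ico (-(1:ℝ)/2) (1/2)

def torusL2 (f : (Fin d → ℝ) → ℂ) : ℝ := Real.sqrt (∫ x in cube d, ‖f x‖ ^ 2)

def fullL2 (f : (Fin d → ℝ) → ℂ) : ℝ := Real.sqrt (∫ x, ‖f x‖ ^ 2)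

/-- membership in the Paley–Wiener space W(Ω). -/
def IsBandlimited (Ω : Set (Fin d → ℝ)) (f : (Fin d → ℝ) → ℂ) : Prop :=
  ∃ F : (Fin d → ℝ) → ℂ, MemLp F 2 (volume.restrict Ω) ∧
    ∀ x, f x = ∫ ω in Ω, F ω * Complex.exp ((2 * Real.pi * Complex.I) * (dotR ω x : ℝ))

/-- membership in P(Ω): trigonometric polynomials with frequencies in Ω ∩ ℤ^d. -/
def IsTrigPoly (Ω : Set (Fin d → ℝ)) (f : (Fin d → ℝ) → ℂ) : Prop :=
  ∃ c : (Fin d → ℤ) → ℂ, (Function.support c).Finite ∧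
    (∀ ω, c ω ≠ 0 → intPt ω ∈ Ω) ∧
    ∀ x, f x = ∑' ω : Fin d → ℤ, c ω * Complex.exp ((2 * Real.pi * Complex.I) * (dotR (intPt ω) x : ℝ))

/-- |Ω|_* = #(Ω ∩ ℤ^d). -/
def intCard (Ω : Set (Fin d → ℝ)) : ℕ := Set.ncard {ω : Fin d → ℤ | intPt ω ∈ Ω}

/-- τ local sparsity ν_p(τ,X) for an indexed family. -/
def localSparsity (p : ℝ≥0∞) (τ : ℝ) (x : ι → Fin d → ℝ) : ℕ :=
  Finset.univ.sup fun k => (Finset.univ.filter fun j => torusDist p (x j) (x k) ≤ τ).card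

/-- τ local sparsity ν_p(τ,X) for a finite set. -/
def finsetSparsity (p : ℝ≥0∞) (τ : ℝ) (X : Finset (Fin d → ℝ)) : ℕ :=
  X.sup fun x => (X.filter fun y => torusDist p y x ≤ τ).card

/-- minimum torus ℓ^p separation of a finite set. -/
def finsetSep (p : ℝ≥0∞) (X : Finset (Fin d → ℝ)) : ℝ :=
  sInf {r | ∃ x ∈ X, ∃ y ∈ X, x ≠ y ∧ torusDist p x y = r}

/-- Fourier transform of a real-valued function on ℝ^d. -/
def FT (f : (Fin d → ℝ) → ℝ) (ξ : Fin d → ℝ) : ℂ :=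
  ∫ x, (f x : ℂ) * Complex.exp (-(2 * Real.pi * Complex.I) * (dotR ξ x : ℝ))


/-- X consists of clumps with parameters (p,τ,λ) in the torus ℓ^p metric. -/
def ConsistsOfClumps (p : ℝ≥0∞) (τ : ℝ) (lam : ℕ) (X : Finset (Fin d → ℝ)) : Prop :=
  ∃ r : ℕ, 0 < r ∧ ∃ C : Fin r → Finset (Fin d → ℝ),
    (∀ k, (C k).card = lam) ∧
    (∀ k l, k ≠ l → Disjoint (C k) (C l)) ∧
    Finset.univ.biUnion C = X ∧
    (∀ k, ∀ x ∈ C k, ∀ y ∈ C k, torusDist p x y ≤ τ) ∧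
    (1 < r → ∀ k l, k ≠ l → ∀ x ∈ C k, ∀ y ∈ C l, τ < torusDist p x y)

local notation "conj'" => starRingEnd ℂ

/-! ### Auxiliary lemmas for statement8 -/

lemma mul_conj_eq (z : ℂ) : z * conj' z = ((‖z‖ ^ 2 : ℝ) : ℂ) := by
  rw [Complex.mul_conj, Complex.normSq_eq_norm_sq]


lemma Fop_add (x : ι → Fin d → ℝ) (u v : ι → ℂ) (ω : Fin d → ℝ) :
    Fop x (u + v) ω = Fop x u ω + Fop x v ω := by
  simp [Fop, add_mul, Finset.sum_add_distrib]

lemma Fop_smul (x : ι → Fin d → ℝ) (c : ℂ) (u : ι → ℂ) (ω : Fin d → ℝ) :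
    Fop x (c • u) ω = c * Fop x u ω := by
  simp [Fop, Finset.mul_sum, mul_assoc]

lemma l2norm_nonneg (u : ι → ℂ) : 0 ≤ l2norm u := Real.sqrt_nonneg _

lemma l2norm_eq_zero_iff {u : ι → ℂ} : l2norm u = 0 ↔ u = 0 := by
  constructor
  · intro h
    have hsum : ∑ k, ‖u k‖ ^ 2 = 0 := by
      refine le_antisymm (Real.sqrt_eq_zero'.1 h) ?_
      exact Finset.sum_nonneg fun k _ => sq_nonneg _
    funext k
    have := (Finset.sum_eq_zero_iff_of_nonneg (fun k _ => sq_nonneg ‖u k‖)).1 hsum k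
      (Finset.mem_univ k)
    have : ‖u k‖ = 0 := by
      have := this
      nlinarith [norm_nonneg (u k)]
    simpa using this
  · rintro rfl
    simp [l2norm]

lemma l2norm_smul (c : ℂ) (u : ι → ℂ) : l2norm (c • u) = ‖c‖ * l2norm u := by
  simp only [l2norm, Pi.smul_apply, smul_eq_mul, norm_mul, mul_pow, ← Finset.mul_sum]
  rw [Real.sqrt_mul (sq_nonneg _), Real.sqrt_sq (norm_nonneg c)]

lemma cs_complex (v w : ι → ℂ) :
    ‖∑ k, conj' (v k) * w k‖ ≤ l2norm v * l2norm w := by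
  have h := norm_inner_le_norm (𝕜 := ℂ) (E := EuclideanSpace ℂ ι)
    ((WithLp.equiv 2 (ι → ℂ)).symm v) ((WithLp.equiv 2 (ι → ℂ)).symm w)
  simp only [PiLp.inner_apply, RCLike.inner_apply,
    EuclideanSpace.norm_eq] at h
  simpa [l2norm, mul_comm] using h

lemma PhiSq_nonneg (Ω : Set (Fin d → ℝ)) (x : ι → Fin d → ℝ) (u : ι → ℂ) :
    0 ≤ PhiSq Ω x u := by
  refine tsum_nonneg fun ω => ?_
  split <;> positivity

lemma PhiSq_eq_sum {Ω : Set (Fin d → ℝ)} (hS : {ω : Fin d → ℤ | intPt ω ∈ Ω}.Finite)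
    (x : ι → Fin d → ℝ) (u : ι → ℂ) :
    PhiSq Ω x u = ∑ ω ∈ hS.toFinset, ‖Fop x u (intPt ω)‖ ^ 2 := by
  rw [PhiSq, tsum_eq_sum (s := hS.toFinset)
    (fun ω hω => if_neg (by simpa [Set.Finite.mem_toFinset] using hω))]
  exact Finset.sum_congr rfl fun ω hω =>
    if_pos (by simpa [Set.Finite.mem_toFinset] using hω)

lemma PhiSq_smul (Ω : Set (Fin d → ℝ)) (x : ι → Fin d → ℝ) (c : ℂ) (u : ι → ℂ) :
    PhiSq Ω x (c • u) = ‖c‖ ^ 2 * PhiSq Ω x u := by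
  rw [PhiSq, PhiSq, ← tsum_mul_left]
  congr 1
  funext ω
  by_cases h : intPt ω ∈ Ω <;> simp [h, Fop_smul, norm_mul, mul_pow]

lemma PhiNorm_smul (Ω : Set (Fin d → ℝ)) (x : ι → Fin d → ℝ) (c : ℂ) (u : ι → ℂ) :
    PhiNorm Ω x (c • u) = ‖c‖ * PhiNorm Ω x u := by
  rw [PhiNorm, PhiNorm, PhiSq_smul, Real.sqrt_mul (sq_nonneg _), Real.sqrt_sq (norm_nonneg c)]

lemma sigma_mul_le (Ω : Set (Fin d → ℝ)) (x : ι → Fin d → ℝ) (v : ι → ℂ) :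
    sigmaMinPhi Ω x * l2norm v ≤ PhiNorm Ω x v := by
  rcases eq_or_ne (l2norm v) 0 with h0 | h0
  · rw [h0, mul_zero]; exact Real.sqrt_nonneg _
  · have hpos : 0 < l2norm v := lt_of_le_of_ne (l2norm_nonneg v) (Ne.symm h0)
    set u : ι → ℂ := (((l2norm v)⁻¹ : ℝ) : ℂ) • v with hu
    have hnc : ‖(((l2norm v)⁻¹ : ℝ) : ℂ)‖ = (l2norm v)⁻¹ := by
      rw [Complex.norm_real, Real.norm_eq_abs, abs_of_nonneg (inv_nonneg.2 hpos.le)]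
    have hu1 : l2norm u = 1 := by
      rw [hu, l2norm_smul, hnc, inv_mul_cancel₀ h0]
    have hbdd : BddBelow (Set.range fun u : {u : ι → ℂ // l2norm u = 1} => PhiNorm Ω x u.1) := by
      refine ⟨0, ?_⟩
      rintro y ⟨u', rfl⟩
      exact Real.sqrt_nonneg _
    have hle : sigmaMinPhi Ω x ≤ PhiNorm Ω x u :=
      ciInf_le hbdd (⟨u, hu1⟩ : {u : ι → ℂ // l2norm u = 1})
    have hPhiu : PhiNorm Ω x u = (l2norm v)⁻¹ * PhiNorm Ω x v := by
      rw [hu, PhiNorm_smul, hnc]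
    calc sigmaMinPhi Ω x * l2norm v
        ≤ ((l2norm v)⁻¹ * PhiNorm Ω x v) * l2norm v := by
          refine mul_le_mul_of_nonneg_right ?_ hpos.le
          rw [← hPhiu]; exact hle
      _ = PhiNorm Ω x v := by field_simp

lemma finite_intPts (Ω : Set (Fin d → ℝ)) (hΩ : IsCompact Ω) :
    {ω : Fin d → ℤ | intPt ω ∈ Ω}.Finite := by
  obtain ⟨r, hr⟩ := hΩ.isBounded.subset_closedBall 0
  refine Set.Finite.subset (Set.finite_Icc (fun _ : Fin d => (-⌈r⌉ : ℤ)) fun _ => ⌈r⌉) ?_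
  intro ω hω
  have hmem : intPt ω ∈ Metric.closedBall (0 : Fin d → ℝ) r := hr hω
  rw [Metric.mem_closedBall, dist_zero_right] at hmem
  have hcoord : ∀ i, |(ω i : ℝ)| ≤ r := by
    intro i
    calc |(ω i : ℝ)| = ‖intPt ω i‖ := rfl
      _ ≤ ‖intPt ω‖ := norm_le_pi_norm _ i
      _ ≤ r := hmem
  constructor
  · intro i
    have h1 : -r ≤ (ω i : ℝ) := neg_le_of_abs_le (hcoord i)
    have : (-⌈r⌉ : ℝ) ≤ (ω i : ℝ) := le_trans (by simpa using neg_le_neg (Int.le_ceil r)) h1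
    exact_mod_cast this
  · intro i
    have h1 : (ω i : ℝ) ≤ r := le_of_abs_le (hcoord i)
    have : (ω i : ℝ) ≤ (⌈r⌉ : ℝ) := le_trans h1 (Int.le_ceil r)
    exact_mod_cast this
/-- The exponential kernel `e^{2πi ω·y}`. -/
def Eker (m : Fin d → ℤ) (y : Fin d → ℝ) : ℂ :=
  Complex.exp ((2 * Real.pi * Complex.I) * (dotR (intPt m) y : ℝ))

lemma conj_exp_neg (t : ℝ) :
    conj' (Complex.exp (-(2 * Real.pi * Complex.I) * (t : ℝ))) =
      Complex.exp ((2 * Real.pi * Complex.I) * (t : ℝ)) := by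
  rw [← Complex.exp_conj]
  congr 1
  simp only [map_neg, map_mul, map_ofNat, Complex.conj_I, Complex.conj_ofReal]
  ring

lemma Eker_norm (m : Fin d → ℤ) (y : Fin d → ℝ) : ‖Eker m y‖ = 1 := by
  have h : (2 * Real.pi * Complex.I) * ((dotR (intPt m) y : ℝ) : ℂ)
      = ((2 * Real.pi * dotR (intPt m) y : ℝ) : ℂ) * Complex.I := by
    push_cast; ring
  rw [Eker, h, Complex.norm_exp_ofReal_mul_I]

lemma dotR_intPt_sub (m m' : Fin d → ℤ) (y : Fin d → ℝ) :
    dotR (intPt (m - m')) y = dotR (intPt m) y - dotR (intPt m') y := by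
  simp only [dotR, intPt, Pi.sub_apply, Int.cast_sub, sub_mul, Finset.sum_sub_distrib]

lemma Eker_mul_conj (m m' : Fin d → ℤ) (y : Fin d → ℝ) :
    Eker m y * conj' (Eker m' y) = Eker (m - m') y := by
  rw [Eker, Eker, Eker, ← Complex.exp_conj, ← Complex.exp_add]
  congr 1
  have : conj' ((2 * Real.pi * Complex.I) * ((dotR (intPt m') y : ℝ) : ℂ))
      = -(2 * Real.pi * Complex.I) * ((dotR (intPt m') y : ℝ) : ℂ) := by
    simp only [map_mul, map_ofNat, Complex.conj_I, Complex.conj_ofReal]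
    ring
  rw [this, dotR_intPt_sub]
  push_cast
  ring

lemma cube_measurableSet : MeasurableSet (cube d) :=
  MeasurableSet.univ_pi fun _ => measurableSet_Ico

lemma cube_volume : volume (cube d) = 1 := by
  rw [cube, volume_pi_pi]
  simp [Real.volume_Ico]
  norm_num

lemma Eker_integrableOn (m : Fin d → ℤ) :
    IntegrableOn (Eker m) (cube d) volume := by
  have hc : Continuous (Eker m) := by
    refine Complex.continuous_exp.comp (continuous_const.mul ?_)
    exact Complex.continuous_ofReal.comp
      (continuous_finset_sum _ fun i _ => continuous_const.mul (continuous_apply i))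
  have hvol : volume (cube d) < ⊤ := by rw [cube_volume]; exact ENNReal.one_lt_top
  refine Integrable.mono' (g := fun _ => (1 : ℝ))
    (integrableOn_const hvol.ne) hc.aestronglyMeasurable.restrict ?_
  filter_upwards with y
  rw [Eker_norm]

lemma oneD_integral (m : ℤ) :
    ∫ t in Set.Ico (-(1:ℝ)/2) (1/2), Complex.exp (2 * Real.pi * Complex.I * (m : ℂ) * (t : ℝ))
      = if m = 0 then 1 else 0 := by
  rcases eq_or_ne m 0 with hm | hm
  · subst hm
    simp only [Int.cast_zero, mul_zero, zero_mul, Complex.exp_zero, if_true]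
    rw [setIntegral_const]
    rw [measureReal_def, Real.volume_Ico]
    norm_num
  · rw [if_neg hm]
    have hc : (2 * Real.pi * Complex.I * (m : ℂ)) ≠ 0 := by
      refine mul_ne_zero (mul_ne_zero (mul_ne_zero two_ne_zero ?_) Complex.I_ne_zero) ?_
      · exact_mod_cast Complex.ofReal_ne_zero.2 Real.pi_ne_zero
      · exact_mod_cast hm
    have h1 : ∫ t in Set.Ico (-(1:ℝ)/2) (1/2),
        Complex.exp (2 * Real.pi * Complex.I * (m : ℂ) * (t : ℝ))
        = ∫ t in (-(1:ℝ)/2)..(1/2), Complex.exp (2 * Real.pi * Complex.I * (m : ℂ) * (t : ℝ)) := by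
      rw [intervalIntegral.integral_of_le (by norm_num),
        MeasureTheory.integral_Ico_eq_integral_Ioo, ← MeasureTheory.integral_Ioc_eq_integral_Ioo]
    rw [h1, integral_exp_mul_complex hc]
    have h2 : (2 * Real.pi * Complex.I * (m : ℂ)) * ((1:ℝ)/2 : ℝ)
        = (2 * Real.pi * Complex.I * (m : ℂ)) * ((-(1:ℝ)/2 : ℝ) : ℂ) + (m : ℂ) * (2 * Real.pi * Complex.I) := by
      push_cast; ring
    rw [h2, Complex.exp_add, Complex.exp_int_mul_two_pi_mul_I, mul_one, sub_self, zero_div]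

lemma integral_cube_Eker (n : Fin d → ℤ) :
    ∫ y in cube d, Eker n y = if n = 0 then 1 else 0 := by
  have hrw : ∀ y : Fin d → ℝ,
      Eker n y = ∏ i, Complex.exp (2 * Real.pi * Complex.I * (n i : ℂ) * ((y i : ℝ) : ℂ)) := by
    intro y
    rw [Eker, ← Complex.exp_sum]
    congr 1
    simp only [dotR, intPt]
    push_cast
    rw [Finset.mul_sum]
    exact Finset.sum_congr rfl fun i _ => by ring
  simp only [hrw]
  rw [← MeasureTheory.integral_indicator cube_measurableSet]
  have hind : ∀ y : Fin d → ℝ,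
      (cube d).indicator
          (fun y => ∏ i, Complex.exp (2 * Real.pi * Complex.I * (n i : ℂ) * ((y i : ℝ) : ℂ))) y
        = ∏ i, (Set.Ico (-(1:ℝ)/2) (1/2)).indicator
            (fun t => Complex.exp (2 * Real.pi * Complex.I * (n i : ℂ) * ((t : ℝ) : ℂ))) (y i) := by
    intro y
    by_cases hy : y ∈ cube d
    · rw [Set.indicator_of_mem hy]
      refine Finset.prod_congr rfl fun i _ => ?_
      rw [Set.indicator_of_mem (hy i (Set.mem_univ i))]
    · rw [Set.indicator_of_notMem hy]
      obtain ⟨i, hi⟩ : ∃ i, y i ∉ Set.Ico (-(1:ℝ)/2) (1/2) := by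
        by_contra hcon
        push_neg at hcon
        exact hy fun i _ => hcon i
      exact (Finset.prod_eq_zero (Finset.mem_univ i) (Set.indicator_of_notMem hi _)).symm
  simp only [hind]
  rw [MeasureTheory.volume_pi, MeasureTheory.integral_fintype_prod_eq_prod
    (f := fun i t => (Set.Ico (-(1:ℝ)/2) (1/2)).indicator
      (fun t => Complex.exp (2 * Real.pi * Complex.I * (n i : ℂ) * ((t : ℝ) : ℂ))) t)]
  have hone : ∀ i, (∫ t : ℝ, (Set.Ico (-(1:ℝ)/2) (1/2)).indicator
      (fun t => Complex.exp (2 * Real.pi * Complex.I * (n i : ℂ) * ((t : ℝ) : ℂ))) t)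
      = if n i = 0 then 1 else 0 := by
    intro i
    rw [MeasureTheory.integral_indicator measurableSet_Ico]
    exact oneD_integral (n i)
  simp only [hone]
  rcases eq_or_ne n 0 with hn | hn
  · subst hn
    simp
  · rw [if_neg hn]
    obtain ⟨i, hi⟩ := Function.ne_iff.1 hn
    have hi' : n i ≠ 0 := by simpa using hi
    exact Finset.prod_eq_zero (Finset.mem_univ i) (if_neg hi')
lemma parseval (T : Finset (Fin d → ℤ)) (a : (Fin d → ℤ) → ℂ) :
    ∫ y in cube d, ‖∑ ω ∈ T, a ω * Eker ω y‖ ^ 2 = ∑ ω ∈ T, ‖a ω‖ ^ 2 := by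
  have hInt : ∀ (m : Fin d → ℤ) (c : ℂ),
      IntegrableOn (fun y => c * Eker m y) (cube d) volume :=
    fun m c => (Eker_integrableOn m).const_mul c
  have h1 : ∀ y : Fin d → ℝ,
      ((‖∑ ω ∈ T, a ω * Eker ω y‖ ^ 2 : ℝ) : ℂ)
        = ∑ ω ∈ T, ∑ ω' ∈ T, (a ω * conj' (a ω')) * Eker (ω - ω') y := by
    intro y
    rw [← mul_conj_eq, map_sum, Finset.sum_mul_sum]
    refine Finset.sum_congr rfl fun ω _ => Finset.sum_congr rfl fun ω' _ => ?_
    rw [map_mul, ← Eker_mul_conj]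
    ring
  have hmain : ((∫ y in cube d, ‖∑ ω ∈ T, a ω * Eker ω y‖ ^ 2 : ℝ) : ℂ)
      = ((∑ ω ∈ T, ‖a ω‖ ^ 2 : ℝ) : ℂ) := by
    calc ((∫ y in cube d, ‖∑ ω ∈ T, a ω * Eker ω y‖ ^ 2 : ℝ) : ℂ)
        = ∫ y in cube d, ((‖∑ ω ∈ T, a ω * Eker ω y‖ ^ 2 : ℝ) : ℂ) :=
          (integral_ofReal (𝕜 := ℂ)).symm
      _
        = ∫ y in cube d, ∑ ω ∈ T, ∑ ω' ∈ T, (a ω * conj' (a ω')) * Eker (ω - ω') y := by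
          exact integral_congr_ae (Filter.Eventually.of_forall fun y => h1 y)
      _ = ∑ ω ∈ T, ∫ y in cube d, ∑ ω' ∈ T, (a ω * conj' (a ω')) * Eker (ω - ω') y := by
          exact integral_finset_sum T fun ω _ =>
            integrable_finset_sum T fun ω' _ => hInt _ _
      _ = ∑ ω ∈ T, ∑ ω' ∈ T, ∫ y in cube d, (a ω * conj' (a ω')) * Eker (ω - ω') y := by
          exact Finset.sum_congr rfl fun ω _ =>
            integral_finset_sum T fun ω' _ => hInt _ _
      _ = ∑ ω ∈ T, ∑ ω' ∈ T, (a ω * conj' (a ω')) * (if ω - ω' = 0 then 1 else 0) := by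
          refine Finset.sum_congr rfl fun ω _ => Finset.sum_congr rfl fun ω' _ => ?_
          rw [MeasureTheory.integral_const_mul, integral_cube_Eker]
      _ = ∑ ω ∈ T, (a ω * conj' (a ω)) := by
          refine Finset.sum_congr rfl fun ω hω => ?_
          have : ∀ ω' : Fin d → ℤ, (a ω * conj' (a ω')) * (if ω - ω' = 0 then 1 else 0)
              = if ω = ω' then a ω * conj' (a ω') else 0 := by
            intro ω'
            simp only [sub_eq_zero]
            split <;> simp
          simp only [this]
          rw [Finset.sum_ite_eq T ω (fun ω' => a ω * conj' (a ω')), if_pos hω]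
      _ = ((∑ ω ∈ T, ‖a ω‖ ^ 2 : ℝ) : ℂ) := by
          simp only [mul_conj_eq]
          norm_cast
  exact Complex.ofReal_injective hmain
def Bop (T : Finset (Fin d → ℤ)) (x : ι → Fin d → ℝ) (v : ι → ℂ) (k : ι) : ℂ :=
  ∑ ω ∈ T, Fop x v (intPt ω) *
    conj' (Complex.exp (-(2 * Real.pi * Complex.I) * (dotR (intPt ω) (x k) : ℝ)))

lemma Bop_add (T : Finset (Fin d → ℤ)) (x : ι → Fin d → ℝ) (u v : ι → ℂ) :
    Bop T x (u + v) = Bop T x u + Bop T x v := by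
  funext k
  simp only [Bop, Fop_add, add_mul, Pi.add_apply]
  rw [Finset.sum_add_distrib]

lemma Bop_smul (T : Finset (Fin d → ℤ)) (x : ι → Fin d → ℝ) (c : ℂ) (v : ι → ℂ) :
    Bop T x (c • v) = c • Bop T x v := by
  funext k
  simp only [Bop, Fop_smul, Pi.smul_apply, smul_eq_mul, Finset.mul_sum, mul_assoc]

lemma Bop_key {Ω : Set (Fin d → ℝ)} (hS : {ω : Fin d → ℤ | intPt ω ∈ Ω}.Finite)
    (x : ι → Fin d → ℝ) (v : ι → ℂ) :
    ∑ k, conj' (v k) * Bop hS.toFinset x v k = ((PhiSq Ω x v : ℝ) : ℂ) := by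
  calc ∑ k, conj' (v k) * Bop hS.toFinset x v k
      = ∑ k, ∑ ω ∈ hS.toFinset, Fop x v (intPt ω) *
          (conj' (v k) * conj' (Complex.exp (-(2 * Real.pi * Complex.I) *
            (dotR (intPt ω) (x k) : ℝ)))) := by
        refine Finset.sum_congr rfl fun k _ => ?_
        rw [Bop, Finset.mul_sum]
        exact Finset.sum_congr rfl fun ω _ => by ring
    _ = ∑ ω ∈ hS.toFinset, ∑ k, Fop x v (intPt ω) *
          (conj' (v k) * conj' (Complex.exp (-(2 * Real.pi * Complex.I) *
            (dotR (intPt ω) (x k) : ℝ)))) := Finset.sum_comm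
    _ = ∑ ω ∈ hS.toFinset, Fop x v (intPt ω) * conj' (Fop x v (intPt ω)) := by
        refine Finset.sum_congr rfl fun ω _ => ?_
        rw [← Finset.mul_sum]
        congr 1
        rw [Fop, map_sum]
        exact Finset.sum_congr rfl fun k _ => (map_mul (starRingEnd ℂ) _ _).symm
    _ = ((PhiSq Ω x v : ℝ) : ℂ) := by
        rw [PhiSq_eq_sum hS]
        simp only [mul_conj_eq]
        norm_cast

/-- existence of norm-controlled interpolating trigonometric polynomials. -/
theorem statement8 (d : ℕ) (hd : 1 ≤ d)
    (Ω : Set (Fin d → ℝ)) (hΩ : IsCompact Ω)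
    (s : ℕ) (x : Fin s → Fin d → ℝ)
    (hxinj : Function.Injective x) (hxcube : ∀ k, x k ∈ cube d)
    (hσ : 0 < sigmaMinPhi Ω x) :
    ∀ w : Fin s → ℂ, ∃ f : (Fin d → ℝ) → ℂ, IsTrigPoly Ω f ∧
      (∀ k, f (x k) = w k) ∧
      torusL2 f ≤ l2norm w / sigmaMinPhi Ω x ∧
      ∀ y, ‖f y‖ ≤ Real.sqrt (intCard Ω) * l2norm w / sigmaMinPhi Ω x := by
  intro w
  have hS := finite_intPts Ω hΩ
  -- surjectivity of the normal operator
  have hsurj : Function.Surjective (Bop hS.toFinset x) := by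
    let B : (Fin s → ℂ) →ₗ[ℂ] (Fin s → ℂ) :=
      { toFun := Bop hS.toFinset x
        map_add' := Bop_add hS.toFinset x
        map_smul' := fun c v => Bop_smul hS.toFinset x c v }
    have hinj : Function.Injective B := by
      rw [injective_iff_map_eq_zero]
      intro v hv
      have hv' : Bop hS.toFinset x v = 0 := hv
      have h0 : ((PhiSq Ω x v : ℝ) : ℂ) = 0 := by
        rw [← Bop_key hS x v, hv']
        simp
      have hPhi0 : PhiSq Ω x v = 0 := by exact_mod_cast h0
      have hn : PhiNorm Ω x v = 0 := by rw [PhiNorm, hPhi0, Real.sqrt_zero]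
      have hle := sigma_mul_le Ω x v
      rw [hn] at hle
      have hv0 : l2norm v ≤ 0 := by nlinarith [l2norm_nonneg v]
      exact l2norm_eq_zero_iff.1 (le_antisymm hv0 (l2norm_nonneg v))
    intro w'
    exact LinearMap.injective_iff_surjective.mp hinj w'
  obtain ⟨v, hv⟩ := hsurj w
  -- key facts about v
  have hPhiSq := PhiSq_eq_sum hS x v
  have hP2 : PhiNorm Ω x v ^ 2 = PhiSq Ω x v := Real.sq_sqrt (PhiSq_nonneg Ω x v)
  have hkey2 : ((PhiSq Ω x v : ℝ) : ℂ) = ∑ k, conj' (v k) * w k := by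
    rw [← Bop_key hS x v, hv]
  have hCS : PhiSq Ω x v ≤ l2norm v * l2norm w := by
    calc PhiSq Ω x v = ‖((PhiSq Ω x v : ℝ) : ℂ)‖ := by
          rw [Complex.norm_real, Real.norm_eq_abs, abs_of_nonneg (PhiSq_nonneg Ω x v)]
      _ = ‖∑ k, conj' (v k) * w k‖ := by rw [hkey2]
      _ ≤ l2norm v * l2norm w := cs_complex v w
  have hσv := sigma_mul_le Ω x v
  have hPle : PhiNorm Ω x v ≤ l2norm w / sigmaMinPhi Ω x := by
    rcases ((Real.sqrt_nonneg (PhiSq Ω x v)).eq_or_lt :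
        (0 : ℝ) = PhiNorm Ω x v ∨ 0 < PhiNorm Ω x v) with hP0 | hPpos
    · have hP0' : PhiNorm Ω x v = 0 := hP0.symm
      rw [hP0']
      exact div_nonneg (l2norm_nonneg w) hσ.le
    · have hvle : l2norm v ≤ PhiNorm Ω x v / sigmaMinPhi Ω x := by
        rw [le_div_iff₀ hσ]
        linarith [hσv, mul_comm (l2norm v) (sigmaMinPhi Ω x)]
      have hmul : PhiNorm Ω x v * PhiNorm Ω x v
          ≤ PhiNorm Ω x v * (l2norm w / sigmaMinPhi Ω x) := by
        calc PhiNorm Ω x v * PhiNorm Ω x v = PhiSq Ω x v := by rw [← hP2]; ring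
          _ ≤ l2norm v * l2norm w := hCS
          _ ≤ (PhiNorm Ω x v / sigmaMinPhi Ω x) * l2norm w :=
              mul_le_mul_of_nonneg_right hvle (l2norm_nonneg w)
          _ = PhiNorm Ω x v * (l2norm w / sigmaMinPhi Ω x) := by ring
      have hPpos' : 0 < PhiNorm Ω x v := hPpos
      exact le_of_mul_le_mul_left hmul hPpos'
  -- the interpolating polynomial
  refine ⟨fun y => ∑ ω ∈ hS.toFinset, Fop x v (intPt ω) * Eker ω y, ?_, ?_, ?_, ?_⟩
  · -- IsTrigPoly
    refine ⟨fun ω => if ω ∈ hS.toFinset then Fop x v (intPt ω) else 0, ?_, ?_, ?_⟩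
    · refine Set.Finite.subset hS.toFinset.finite_toSet ?_
      intro ω hω
      simp only [Function.mem_support] at hω
      by_contra hc
      exact hω (if_neg (by simpa using hc))
    · intro ω hω
      by_cases h : ω ∈ hS.toFinset
      · exact (hS.mem_toFinset).1 h
      · exact absurd (if_neg h) hω
    · intro y
      have h0 : ∀ ω ∉ hS.toFinset,
          (if ω ∈ hS.toFinset then Fop x v (intPt ω) else 0) *
            Complex.exp ((2 * Real.pi * Complex.I) * (dotR (intPt ω) y : ℝ)) = 0 :=
        fun ω hω => by rw [if_neg hω, zero_mul]
      rw [tsum_eq_sum h0]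
      exact Finset.sum_congr rfl fun ω hω => by rw [if_pos hω]; rfl
  · -- interpolation
    intro k
    have hfk : ∑ ω ∈ hS.toFinset, Fop x v (intPt ω) * Eker ω (x k)
        = Bop hS.toFinset x v k := by
      rw [Bop]
      refine Finset.sum_congr rfl fun ω _ => ?_
      rw [conj_exp_neg]
      rfl
    show ∑ ω ∈ hS.toFinset, Fop x v (intPt ω) * Eker ω (x k) = w k
    rw [hfk, hv]
  · -- L² bound
    have hparse := parseval hS.toFinset (fun ω => Fop x v (intPt ω))
    have hL2 : torusL2 (fun y => ∑ ω ∈ hS.toFinset, Fop x v (intPt ω) * Eker ω y)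
        = PhiNorm Ω x v := by
      simp only [torusL2]
      rw [hparse, PhiNorm, hPhiSq]
    rw [hL2]
    exact hPle
  · -- sup bound
    intro y
    have hb : ‖∑ ω ∈ hS.toFinset, Fop x v (intPt ω) * Eker ω y‖
        ≤ ∑ ω ∈ hS.toFinset, ‖Fop x v (intPt ω)‖ := by
      refine (norm_sum_le _ _).trans ?_
      refine Finset.sum_le_sum fun ω _ => ?_
      rw [norm_mul, Eker_norm, mul_one]
    have hcs : ∑ ω ∈ hS.toFinset, ‖Fop x v (intPt ω)‖
        ≤ Real.sqrt (hS.toFinset.card) * PhiNorm Ω x v := by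
      have h1 := sq_sum_le_card_mul_sum_sq (s := hS.toFinset)
        (f := fun ω => ‖Fop x v (intPt ω)‖)
      rw [show (∑ ω ∈ hS.toFinset, ‖Fop x v (intPt ω)‖)
          = Real.sqrt ((∑ ω ∈ hS.toFinset, ‖Fop x v (intPt ω)‖) ^ 2) from
        (Real.sqrt_sq (Finset.sum_nonneg fun ω _ => norm_nonneg _)).symm]
      rw [PhiNorm, hPhiSq, ← Real.sqrt_mul (by positivity)]
      exact Real.sqrt_le_sqrt (by exact_mod_cast h1)
    have hcard : ((hS.toFinset.card : ℕ) : ℝ) = ((intCard Ω : ℕ) : ℝ) := by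
      rw [intCard, Set.ncard_eq_toFinset_card _ hS]
    calc ‖∑ ω ∈ hS.toFinset, Fop x v (intPt ω) * Eker ω y‖
        ≤ Real.sqrt (hS.toFinset.card) * PhiNorm Ω x v := hb.trans hcs
      _ ≤ Real.sqrt (hS.toFinset.card) * (l2norm w / sigmaMinPhi Ω x) :=
          mul_le_mul_of_nonneg_left hPle (Real.sqrt_nonneg _)
      _ = Real.sqrt (intCard Ω) * l2norm w / sigmaMinPhi Ω x := by
          rw [hcard, mul_div_assoc]

end NF
end
end

section
/- Let d ≥ 1 be an integer, τ > 0, p ∈ [1,∞], and let X ⊆ [-1/2,1/2)^d be a finite nonempty set; set ν := ν_p(τ,X), computed with the torus ℓ^p metric. Then there exist nonempty pairwise disjoint subsets X_1, X_2, …, X_ν of X whose union is X and such that Δ_p(X_k) > τ for each k = 1,…,ν (where Δ_p of a one-element set is interpreted as +∞). -/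
open MeasureTheory Finset
open scoped ENNReal Classical BigOperators

noncomputable section

namespace NF

variable {d : ℕ} {ι : Type*} [Fintype ι]

lemma lpnorm_nonneg (p : ℝ≥0∞) (x : Fin d → ℝ) : 0 ≤ lpnorm p x := by
  unfold lpnorm
  split
  · exact Real.iSup_nonneg fun i => abs_nonneg _
  · exact Real.rpow_nonneg (Finset.sum_nonneg fun i _ => Real.rpow_nonneg (abs_nonneg _) _) _

lemma lpnorm_zero (hd : 0 < d) (p : ℝ≥0∞) (hp : 1 ≤ p) :
    lpnorm p (fun _ : Fin d => (0:ℝ)) = 0 := by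
  haveI : Nonempty (Fin d) := Fin.pos_iff_nonempty.mp hd
  unfold lpnorm
  split
  · simp
  · rename_i h
    have ht : 0 < p.toReal := ENNReal.toReal_pos (by positivity) h
    simp [Real.zero_rpow ht.ne', Real.zero_rpow (inv_ne_zero ht.ne'), Real.zero_rpow (one_div_ne_zero ht.ne')]

lemma lpnorm_congr_abs {p : ℝ≥0∞} {u v : Fin d → ℝ} (h : ∀ i, |u i| = |v i|) :
    lpnorm p u = lpnorm p v := by
  unfold lpnorm
  simp only [h]

lemma torusDist_bddBelow (p : ℝ≥0∞) (x y : Fin d → ℝ) :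
    BddBelow (Set.range fun n : Fin d → ℤ => lpnorm p fun i => x i - y i + (n i : ℝ)) := by
  refine ⟨0, ?_⟩
  rintro r ⟨n, rfl⟩
  exact lpnorm_nonneg _ _

lemma torusDist_self_le (hd : 0 < d) {p : ℝ≥0∞} (hp : 1 ≤ p) (x : Fin d → ℝ) :
    torusDist p x x ≤ 0 := by
  have h := ciInf_le (torusDist_bddBelow p x x) (0 : Fin d → ℤ)
  have he : (fun i => x i - x i + (((0 : Fin d → ℤ) i : ℤ) : ℝ)) = fun _ : Fin d => (0:ℝ) := by
    funext i; simp
  rw [he, lpnorm_zero hd p hp] at h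
  exact h

lemma torusDist_symm (p : ℝ≥0∞) (x y : Fin d → ℝ) : torusDist p x y = torusDist p y x := by
  unfold torusDist
  rw [iInf, iInf]
  congr 1
  ext r
  constructor
  · rintro ⟨m, rfl⟩
    exact ⟨-m, lpnorm_congr_abs fun i => by
      simp only [Pi.neg_apply, Int.cast_neg]
      rw [show y i - x i + -(m i : ℝ) = -(x i - y i + (m i : ℝ)) by ring, abs_neg]⟩
  · rintro ⟨m, rfl⟩
    exact ⟨-m, lpnorm_congr_abs fun i => by
      simp only [Pi.neg_apply, Int.cast_neg]
      rw [show x i - y i + -(m i : ℝ) = -(y i - x i + (m i : ℝ)) by ring, abs_neg]⟩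


lemma exists_coloring {V : Type*} [DecidableEq V] (dist : V → V → ℝ) (τ : ℝ)
    (hsymm : ∀ x y, dist x y = dist y x) (hself : ∀ x, dist x x ≤ τ)
    (ν : ℕ) (X : Finset V)
    (hν : ∀ x ∈ X, (X.filter fun y => dist y x ≤ τ).card ≤ ν) :
    ∀ Y : Finset V, Y ⊆ X → ∃ c : V → ℕ,
      (∀ x ∈ Y, c x < ν) ∧
      ∀ x ∈ Y, ∀ y ∈ Y, x ≠ y → c x = c y → τ < dist x y := by
  intro Y
  induction Y using Finset.induction_on with
  | empty => exact fun _ => ⟨fun _ => 0, by simp, by simp⟩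
  | @insert a s ha ih =>
    intro hsub
    have hs : s ⊆ X := fun y hy => hsub (Finset.mem_insert_of_mem hy)
    have haX : a ∈ X := hsub (Finset.mem_insert_self a s)
    obtain ⟨c, hcb, hcg⟩ := ih hs
    set F := (s.filter fun y => dist y a ≤ τ).image c with hF
    have hins : insert a (s.filter fun y => dist y a ≤ τ) ⊆ X.filter fun y => dist y a ≤ τ := by
      intro z hz
      rcases Finset.mem_insert.mp hz with rfl | hz
      · exact Finset.mem_filter.mpr ⟨haX, hself z⟩
      · exact Finset.filter_subset_filter _ hs hz
    have hcard : (s.filter fun y => dist y a ≤ τ).card + 1 ≤ ν := by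
      have h1 : (insert a (s.filter fun y => dist y a ≤ τ)).card ≤ ν :=
        le_trans (Finset.card_le_card hins) (hν a haX)
      rwa [Finset.card_insert_of_notMem (fun h => ha (Finset.mem_filter.mp h).1)] at h1
    have hFsub : F ⊆ Finset.range ν := by
      intro m hm
      obtain ⟨y, hy, rfl⟩ := Finset.mem_image.mp hm
      exact Finset.mem_range.mpr (hcb y (Finset.mem_filter.mp hy).1)
    have hFlt : F.card < (Finset.range ν).card := by
      rw [Finset.card_range]
      calc F.card ≤ (s.filter fun y => dist y a ≤ τ).card := Finset.card_image_le
        _ < ν := by omega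
    have hss : F ⊂ Finset.range ν :=
      hFsub.ssubset_of_ne (fun h => by rw [h] at hFlt; exact lt_irrefl _ hFlt)
    obtain ⟨m, hmν, hmF⟩ := Finset.exists_of_ssubset hss
    have hmν : m ∈ Finset.range ν := hmν
    refine ⟨Function.update c a m, ?_, ?_⟩
    · intro x hx
      rcases Finset.mem_insert.mp hx with rfl | hx'
      · rw [Function.update_self]; exact Finset.mem_range.mp hmν
      · rw [Function.update_of_ne (ne_of_mem_of_not_mem hx' ha)]; exact hcb x hx'
    · have key : ∀ z ∈ s, Function.update c a m z = m → τ < dist z a := by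
        intro z hz hzm
        rw [Function.update_of_ne (ne_of_mem_of_not_mem hz ha)] at hzm
        by_contra hle
        push_neg at hle
        exact hmF (Finset.mem_image.mpr ⟨z, Finset.mem_filter.mpr ⟨hz, hle⟩, hzm⟩)
      intro x hx y hy hne heq
      rcases Finset.mem_insert.mp hx with hx' | hx'
      · rcases Finset.mem_insert.mp hy with hy' | hy'
        · exact absurd (hx'.trans hy'.symm) hne
        · subst hx'
          rw [hsymm]
          exact key y hy' (by rw [← heq, Function.update_self])
      · rcases Finset.mem_insert.mp hy with hy' | hy'
        · subst hy'
          exact key x hx' (by rw [heq, Function.update_self])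
        · refine hcg x hx' y hy' hne ?_
          rwa [Function.update_of_ne (ne_of_mem_of_not_mem hx' ha),
            Function.update_of_ne (ne_of_mem_of_not_mem hy' ha)] at heq

lemma fixup {V : Type*} [DecidableEq V] (good : Finset V → Prop)
    (hmono : ∀ s t : Finset V, s ⊆ t → good t → good s)
    (ν : ℕ) (X : Finset V) (hνX : ν ≤ X.card) :
    ∀ n (Q : Fin ν → Finset V),
      (Finset.univ.filter fun k => Q k = ∅).card = n →
      (∀ k l, k ≠ l → Disjoint (Q k) (Q l)) →
      Finset.univ.biUnion Q = X →
      (∀ k, good (Q k)) →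
      ∃ P : Fin ν → Finset V, (∀ k, (P k).Nonempty) ∧
        (∀ k l, k ≠ l → Disjoint (P k) (P l)) ∧
        Finset.univ.biUnion P = X ∧ ∀ k, good (P k) := by
  intro n
  induction n with
  | zero =>
    intro Q hQ0 hdisj hun hg
    refine ⟨Q, ?_, hdisj, hun, hg⟩
    intro k
    rw [Finset.nonempty_iff_ne_empty]
    intro h
    have hk : k ∈ Finset.univ.filter fun k => Q k = ∅ :=
      Finset.mem_filter.mpr ⟨Finset.mem_univ k, h⟩
    rw [Finset.card_eq_zero] at hQ0
    simp [hQ0] at hk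
  | succ n ih =>
    intro Q hQ0 hdisj hun hg
    obtain ⟨k₀, hk₀⟩ : ∃ k, Q k = ∅ := by
      have : (Finset.univ.filter fun k => Q k = ∅).Nonempty :=
        Finset.card_pos.mp (by omega)
      obtain ⟨k, hk⟩ := this
      exact ⟨k, (Finset.mem_filter.mp hk).2⟩
    have hsum : ∑ k, (Q k).card = X.card := by
      rw [← hun, Finset.card_biUnion (fun k _ l _ h => hdisj k l h)]
    obtain ⟨k₁, hk₁⟩ : ∃ k, 2 ≤ (Q k).card := by
      by_contra hno
      push_neg at hno
      have hlt : ∑ k, (Q k).card < ∑ _k : Fin ν, 1 := by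
        refine Finset.sum_lt_sum (fun k _ => by have := hno k; omega) ⟨k₀, Finset.mem_univ _, ?_⟩
        simp [hk₀]
      simp only [Finset.sum_const, Finset.card_univ, Fintype.card_fin, smul_eq_mul, mul_one] at hlt
      omega
    obtain ⟨x, hx⟩ : (Q k₁).Nonempty := Finset.card_pos.mp (by omega)
    have hk01 : k₀ ≠ k₁ := by
      intro h
      rw [← h, hk₀] at hk₁
      simp at hk₁
    have hxnot : ∀ k, k ≠ k₁ → x ∉ Q k := fun k hk hmem =>
      Finset.disjoint_left.mp (hdisj k k₁ hk) hmem hx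
    have hxX : x ∈ X := by
      rw [← hun]; exact Finset.mem_biUnion.mpr ⟨k₁, Finset.mem_univ _, hx⟩
    set Q' : Fin ν → Finset V := fun k => if k = k₀ then {x} else (Q k).erase x with hQ'
    have hcount : (Finset.univ.filter fun k => Q' k = ∅)
        = (Finset.univ.filter fun k => Q k = ∅).erase k₀ := by
      ext k
      simp only [Finset.mem_filter, Finset.mem_erase, Finset.mem_univ, true_and, hQ']
      by_cases hk : k = k₀
      · subst hk
        simp only [if_pos rfl]
        constructor
        · intro h; exact absurd h (Finset.singleton_ne_empty x)
        · rintro ⟨h, _⟩; exact absurd rfl h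
      · rw [if_neg hk]
        by_cases hk1 : k = k₁
        · subst hk1
          constructor
          · intro h
            have := Finset.card_erase_of_mem hx
            rw [h] at this
            simp at this
            omega
          · rintro ⟨-, h⟩
            rw [h] at hk₁
            simp at hk₁
        · rw [Finset.erase_eq_of_notMem (hxnot k hk1)]
          exact ⟨fun h => ⟨hk, h⟩, fun h => h.2⟩
    have hcard' : (Finset.univ.filter fun k => Q' k = ∅).card = n := by
      have hk0mem : k₀ ∈ Finset.univ.filter (fun k => Q k = ∅) :=
        Finset.mem_filter.mpr ⟨Finset.mem_univ _, hk₀⟩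
      rw [hcount, Finset.card_erase_of_mem hk0mem, hQ0]
      omega
    have hdisj' : ∀ k l, k ≠ l → Disjoint (Q' k) (Q' l) := by
      intro k l hkl
      simp only [hQ']
      by_cases hk : k = k₀ <;> by_cases hl : l = k₀
      · exact absurd (hk.trans hl.symm) hkl
      · rw [if_pos hk, if_neg hl]
        exact Finset.disjoint_singleton_left.mpr (Finset.notMem_erase _ _)
      · rw [if_neg hk, if_pos hl]
        exact Finset.disjoint_singleton_right.mpr (Finset.notMem_erase _ _)
      · rw [if_neg hk, if_neg hl]
        exact Disjoint.mono (Finset.erase_subset _ _) (Finset.erase_subset _ _) (hdisj k l hkl)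
    have hun' : Finset.univ.biUnion Q' = X := by
      ext a
      simp only [Finset.mem_biUnion, Finset.mem_univ, true_and]
      constructor
      · rintro ⟨k, hk⟩
        simp only [hQ'] at hk
        by_cases h : k = k₀
        · rw [if_pos h] at hk
          rwa [Finset.mem_singleton.mp hk]
        · rw [if_neg h] at hk
          rw [← hun]
          exact Finset.mem_biUnion.mpr ⟨k, Finset.mem_univ _, Finset.mem_of_mem_erase hk⟩
      · intro haX
        by_cases h : a = x
        · exact ⟨k₀, by simp [hQ', h]⟩
        · rw [← hun] at haX
          obtain ⟨k, -, hk⟩ := Finset.mem_biUnion.mp haX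
          have hkk0 : k ≠ k₀ := by
            intro he; rw [he, hk₀] at hk; exact absurd hk (Finset.notMem_empty a)
          exact ⟨k, by simp only [hQ', if_neg hkk0]; exact Finset.mem_erase.mpr ⟨h, hk⟩⟩
    have hg' : ∀ k, good (Q' k) := by
      intro k
      simp only [hQ']
      by_cases h : k = k₀
      · rw [if_pos h]
        exact hmono _ _ (Finset.singleton_subset_iff.mpr hx) (hg k₁)
      · rw [if_neg h]
        exact hmono _ _ (Finset.erase_subset _ _) (hg k)
    exact ih Q' hcard' hdisj' hun' hg'

/-- decomposition of a set into ν well-separated subsets. -/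
theorem statement9 (d : ℕ) (hd : 1 ≤ d) (τ : ℝ) (hτ : 0 < τ)
    (p : ℝ≥0∞) (hp : 1 ≤ p)
    (X : Finset (Fin d → ℝ)) (hXne : X.Nonempty) (hXc : ∀ x ∈ X, x ∈ cube d) :
    ∃ P : Fin (finsetSparsity p τ X) → Finset (Fin d → ℝ),
      (∀ k, (P k).Nonempty) ∧ (∀ k, P k ⊆ X) ∧
      (∀ k l, k ≠ l → Disjoint (P k) (P l)) ∧
      Finset.univ.biUnion P = X ∧
      ∀ k, ∀ x ∈ P k, ∀ y ∈ P k, x ≠ y → τ < torusDist p x y := by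
  have hd0 : 0 < d := hd
  set ν := finsetSparsity p τ X with hν
  have hself : ∀ z : Fin d → ℝ, torusDist p z z ≤ τ :=
    fun z => le_trans (torusDist_self_le hd0 hp z) hτ.le
  have hsup : ∀ x ∈ X, (X.filter fun y => torusDist p y x ≤ τ).card ≤ ν := by
    intro x hx
    exact Finset.le_sup (f := fun x => (X.filter fun y => torusDist p y x ≤ τ).card) hx
  obtain ⟨c, hcb, hcg⟩ := exists_coloring (torusDist p) τ (torusDist_symm p) hself ν X hsup
    X Finset.Subset.rfl
  have hνX : ν ≤ X.card :=
    Finset.sup_le fun x _ => Finset.card_le_card (Finset.filter_subset _ _)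
  set Q : Fin ν → Finset (Fin d → ℝ) := fun k => X.filter fun x => c x = (k : ℕ) with hQ
  have hdisj : ∀ k l, k ≠ l → Disjoint (Q k) (Q l) := by
    intro k l hkl
    rw [Finset.disjoint_left]
    intro a ha hb
    exact hkl (Fin.ext ((Finset.mem_filter.mp ha).2.symm.trans (Finset.mem_filter.mp hb).2))
  have hun : Finset.univ.biUnion Q = X := by
    ext a
    simp only [Finset.mem_biUnion, Finset.mem_univ, true_and, hQ, Finset.mem_filter]
    constructor
    · rintro ⟨k, h, -⟩; exact h
    · intro ha; exact ⟨⟨c a, hcb a ha⟩, ha, rfl⟩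
  have hgQ : ∀ k, ∀ x ∈ Q k, ∀ y ∈ Q k, x ≠ y → τ < torusDist p x y := by
    intro k x hx y hy hne
    obtain ⟨hxX, hcx⟩ := Finset.mem_filter.mp hx
    obtain ⟨hyX, hcy⟩ := Finset.mem_filter.mp hy
    exact hcg x hxX y hyX hne (hcx.trans hcy.symm)
  obtain ⟨P, h1, h2, h3, h4⟩ :=
    fixup (fun s => ∀ x ∈ s, ∀ y ∈ s, x ≠ y → τ < torusDist p x y)
      (fun s t hst hg x hx y hy => hg x (hst hx) y (hst hy)) ν X hνX _ Q rfl hdisj hun hgQ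
  exact ⟨P, h1, fun k a ha => by
      rw [← h3]; exact Finset.mem_biUnion.mpr ⟨k, Finset.mem_univ _, ha⟩,
    h2, h3, h4⟩

end NF
end
end

section
/- Let d ≥ 2 be an integer, p ∈ [1,∞], and u ∈ [-1/2,1/2)^d with 0 < |u|_{p'} ≤ 1/(4 d^{1/p}). Then for any real α with |u|_{p'} ≤ α ≤ 1/(4 d^{1/p}) there exists q ∈ ℤ^d such that |q|_p ≤ 1/(2α), (1/(4α))·|u|_{p'} ≤ |q·u| ≤ 1/2, and |1 − e^{2πi q·u}| ≥ (√2/α)·|u|_{p'}. -/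
open MeasureTheory Finset
open scoped ENNReal Classical BigOperators

noncomputable section

namespace NF

variable {d : ℕ} {ι : Type*} [Fintype ι]

-- auxiliary lemmas for statement11
private lemma norm_one_sub_exp' (t : ℝ) :
    ‖1 - Complex.exp (2 * Real.pi * Complex.I * t)‖ = 2 * |Real.sin (Real.pi * t)| := by
  have h : (2 : ℂ) * Real.pi * Complex.I * t = ((2 * Real.pi * t : ℝ) : ℂ) * Complex.I := by
    push_cast; ring
  rw [h, Complex.exp_mul_I]
  have h2 : (1 : ℂ) - (Complex.cos (2 * Real.pi * t : ℝ) + Complex.sin (2 * Real.pi * t : ℝ) * Complex.I)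
      = ((1 - Real.cos (2 * Real.pi * t) : ℝ) : ℂ) + ((-(Real.sin (2 * Real.pi * t)) : ℝ) : ℂ) * Complex.I := by
    push_cast [Complex.ofReal_cos, Complex.ofReal_sin]; ring
  rw [h2, Complex.norm_add_mul_I]
  have hcos : Real.cos (2 * Real.pi * t) = 1 - 2 * Real.sin (Real.pi * t) ^ 2 := by
    have h1 := Real.cos_two_mul (Real.pi * t)
    have h3 := Real.cos_sq' (Real.pi * t)
    rw [show 2 * (Real.pi * t) = 2 * Real.pi * t by ring] at h1
    nlinarith
  have h4 : (1 - Real.cos (2 * Real.pi * t)) ^ 2 + (-(Real.sin (2 * Real.pi * t))) ^ 2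
      = (2 * |Real.sin (Real.pi * t)|) ^ 2 := by
    have hs := Real.sin_sq_add_cos_sq (2 * Real.pi * t)
    have habs : |Real.sin (Real.pi * t)| ^ 2 = Real.sin (Real.pi * t) ^ 2 := sq_abs _
    nlinarith
  rw [h4, Real.sqrt_sq (by positivity)]

private lemma sin_chord' {s : ℝ} (h0 : 0 ≤ s) (h1 : s ≤ 1 / 4) :
    2 * Real.sqrt 2 * s ≤ Real.sin (Real.pi * s) := by
  have hpi := Real.pi_pos
  have key : (1 - 4 * s) • Real.sin 0 + (4 * s) • Real.sin (Real.pi / 4)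
      ≤ Real.sin ((1 - 4 * s) • (0 : ℝ) + (4 * s) • (Real.pi / 4)) :=
    strictConcaveOn_sin_Icc.concaveOn.2 ⟨le_refl 0, hpi.le⟩
      ⟨by positivity, by linarith⟩ (by linarith) (by linarith) (by ring)
  simp only [smul_eq_mul, mul_zero, Real.sin_zero, zero_add] at key
  rw [show 4 * s * (Real.pi / 4) = Real.pi * s by ring, Real.sin_pi_div_four] at key
  calc 2 * Real.sqrt 2 * s = 4 * s * (Real.sqrt 2 / 2) := by ring
    _ ≤ Real.sin (Real.pi * s) := key

set_option maxHeartbeats 1000000 in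
private lemma quant_aux {d : ℕ} (u : Fin d → ℝ) (N : ℝ) (hN0 : 0 < N)
    (α D : ℝ) (hD1 : 1 ≤ D) (hα1 : N ≤ α) (hα2 : α ≤ 1 / (4 * D))
    (P : (Fin d → ℝ) → ℝ)
    (w : Fin d → ℝ) (hw : dotR w u = N)
    (hPq : ∀ e : Fin d → ℝ, (∀ i, |e i| ≤ 1) →
      P (fun i => (1 / (2 * α) - D) * w i + e i) ≤ 1 / (2 * α))
    (hl1 : (∑ i, |u i|) ≤ D * N) :
    ∃ qv : Fin d → ℤ, P (intPt qv) ≤ 1 / (2 * α) ∧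
      1 / (4 * α) * N ≤ |dotR (intPt qv) u| ∧ |dotR (intPt qv) u| ≤ 1 / 2 ∧
      Real.sqrt 2 / α * N
        ≤ ‖1 - Complex.exp (2 * Real.pi * Complex.I * (dotR (intPt qv) u : ℝ))‖ := by
  have hα0 : 0 < α := lt_of_lt_of_le hN0 hα1
  have hD0 : 0 < D := lt_of_lt_of_le one_pos hD1
  have hDα : D ≤ 1 / (4 * α) := by
    rw [le_div_iff₀ (by positivity)]
    rw [le_div_iff₀ (by positivity)] at hα2
    linarith
  set c : ℝ := 1 / (2 * α) - D with hc
  have hc4 : 1 / (4 * α) ≤ c := by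
    have : 1 / (2 * α) = 1 / (4 * α) + 1 / (4 * α) := by field_simp; ring
    rw [hc, this]; linarith
  have hc0 : 0 < c := lt_of_lt_of_le (by positivity) hc4
  refine ⟨fun i => if 0 ≤ u i then ⌈c * w i⌉ else ⌊c * w i⌋, ?_⟩
  set qv : Fin d → ℤ := fun i => if 0 ≤ u i then ⌈c * w i⌉ else ⌊c * w i⌋ with hqv
  set e : Fin d → ℝ := fun i => (qv i : ℝ) - c * w i with he
  have he_abs : ∀ i, |e i| ≤ 1 := by
    intro i
    rw [he, hqv]; simp only
    split_ifs with h
    · rw [abs_of_nonneg (by linarith [Int.le_ceil (c * w i)])]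
      linarith [Int.ceil_lt_add_one (c * w i)]
    · rw [abs_of_nonpos (by linarith [Int.floor_le (c * w i)])]
      linarith [Int.lt_floor_add_one (c * w i)]
  have he_sign : ∀ i, 0 ≤ e i * u i := by
    intro i
    rw [he, hqv]; simp only
    split_ifs with h
    · exact mul_nonneg (by linarith [Int.le_ceil (c * w i)]) h
    · have h1 : (⌊c * w i⌋ : ℝ) - c * w i ≤ 0 := by linarith [Int.floor_le (c * w i)]
      have h2 : u i ≤ 0 := (not_le.mp h).le
      nlinarith
  have hpt : intPt qv = fun i => c * w i + e i := by
    funext i; rw [intPt, he]; ring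
  have hdot : dotR (intPt qv) u = c * N + ∑ i, e i * u i := by
    rw [hpt, dotR, ← hw, dotR, Finset.mul_sum, ← Finset.sum_add_distrib]
    congr 1; funext i; ring
  have hsum0 : 0 ≤ ∑ i, e i * u i := Finset.sum_nonneg fun i _ => he_sign i
  have hsumup : ∑ i, e i * u i ≤ D * N := by
    refine le_trans (Finset.sum_le_sum fun i _ => ?_) hl1
    calc e i * u i ≤ |e i * u i| := le_abs_self _
      _ = |e i| * |u i| := abs_mul _ _
      _ ≤ 1 * |u i| := mul_le_mul_of_nonneg_right (he_abs i) (abs_nonneg _)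
      _ = |u i| := one_mul _
  have htlow : 1 / (4 * α) * N ≤ dotR (intPt qv) u := by
    rw [hdot]
    have : 1 / (4 * α) * N ≤ c * N := mul_le_mul_of_nonneg_right hc4 hN0.le
    linarith
  have htpos : 0 < dotR (intPt qv) u :=
    lt_of_lt_of_le (by positivity) htlow
  have htup : dotR (intPt qv) u ≤ 1 / 2 := by
    rw [hdot]
    have h1 : c * N + D * N = 1 / (2 * α) * N := by rw [hc]; ring
    have h2 : 1 / (2 * α) * N ≤ 1 / (2 * α) * α := mul_le_mul_of_nonneg_left hα1 (by positivity)
    have h3 : 1 / (2 * α) * α = 1 / 2 := by field_simp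
    linarith
  have habs : |dotR (intPt qv) u| = dotR (intPt qv) u := abs_of_pos htpos
  refine ⟨by rw [hpt]; exact hPq e he_abs, by rw [habs]; exact htlow, by rw [habs]; exact htup, ?_⟩
  set t : ℝ := dotR (intPt qv) u with ht
  rw [norm_one_sub_exp']
  have hpi := Real.pi_pos
  set s : ℝ := 1 / (4 * α) * N with hs
  have hs0 : 0 < s := by positivity
  have hs14 : s ≤ 1 / 4 := by
    rw [hs]
    calc 1 / (4 * α) * N ≤ 1 / (4 * α) * α := mul_le_mul_of_nonneg_left hα1 (by positivity)
      _ = 1 / 4 := by field_simp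
  have hst : s ≤ t := htlow
  have hsin_mono : Real.sin (Real.pi * s) ≤ Real.sin (Real.pi * t) := by
    apply Real.strictMonoOn_sin.monotoneOn
    · constructor <;> nlinarith
    · constructor <;> nlinarith
    · nlinarith
  have hchord := sin_chord' hs0.le hs14
  have hsin_nonneg : 0 ≤ Real.sin (Real.pi * t) :=
    Real.sin_nonneg_of_nonneg_of_le_pi (by positivity) (by nlinarith)
  rw [abs_of_nonneg hsin_nonneg]
  have hfin : Real.sqrt 2 / α * N = 2 * (2 * Real.sqrt 2 * s) := by
    rw [hs]; field_simp; ring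
  rw [hfin]
  linarith

private lemma conjExponent_of_ennreal {p q : ℝ≥0∞} (hp : 1 ≤ p) (hp1 : p ≠ 1) (hpt : p ≠ ∞)
    (h : p⁻¹ + q⁻¹ = 1) : q ≠ ∞ ∧ Real.HolderConjugate p.toReal q.toReal := by
  have hp0 : p ≠ 0 := by intro h0; rw [h0] at hp; simp at hp
  have hqt : q ≠ ∞ := by
    intro h0; rw [h0] at h; simp at h
    exact hp1 h
  have hq0 : q ≠ 0 := by intro h0; rw [h0] at h; simp at h
  have hreal : p.toReal⁻¹ + q.toReal⁻¹ = 1 := by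
    have h5 := congrArg ENNReal.toReal h
    rw [ENNReal.toReal_add (by simp [hp0]) (by simp [hq0])] at h5
    simpa [ENNReal.toReal_inv] using h5
  have hpr1 : 1 < p.toReal := by
    have hlt : 1 < p := lt_of_le_of_ne hp (Ne.symm hp1)
    have h6 := ENNReal.toReal_lt_toReal (by simp) hpt |>.mpr hlt
    simpa using h6
  exact ⟨hqt, Real.holderConjugate_iff.mpr ⟨hpr1, hreal⟩⟩

set_option maxHeartbeats 1000000 in
/-- quantization lemma. -/
theorem statement11 (d : ℕ) (hd : 2 ≤ d)
    (p q : ℝ≥0∞) (hp : 1 ≤ p) (hpq : p⁻¹ + q⁻¹ = 1)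
    (u : Fin d → ℝ) (hu : u ∈ cube d)
    (hu0 : 0 < lpnorm q u)
    (hub : lpnorm q u ≤ 1 / (4 * (d : ℝ) ^ (1 / p).toReal))
    (α : ℝ) (hα1 : lpnorm q u ≤ α)
    (hα2 : α ≤ 1 / (4 * (d : ℝ) ^ (1 / p).toReal)) :
    ∃ qv : Fin d → ℤ,
      lpnorm p (intPt qv) ≤ 1 / (2 * α) ∧
      1 / (4 * α) * lpnorm q u ≤ |dotR (intPt qv) u| ∧
      |dotR (intPt qv) u| ≤ 1 / 2 ∧
      Real.sqrt 2 / α * lpnorm q u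
        ≤ ‖1 - Complex.exp (2 * Real.pi * Complex.I * (dotR (intPt qv) u : ℝ))‖ := by
  have hd2 : (2 : ℝ) ≤ (d : ℝ) := by exact_mod_cast hd
  have hne : Nonempty (Fin d) := ⟨⟨0, by omega⟩⟩
  have hα0 : 0 < α := lt_of_lt_of_le hu0 hα1
  set D : ℝ := (d : ℝ) ^ (1 / p).toReal with hD
  have hD1 : 1 ≤ D := by
    rw [hD, ← Real.one_rpow (1 / p).toReal]
    exact Real.rpow_le_rpow zero_le_one (by linarith) ENNReal.toReal_nonneg
  have hD0 : 0 < D := lt_of_lt_of_le one_pos hD1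
  have hcD : D ≤ 1 / (2 * α) := by
    rw [le_div_iff₀ (by positivity)]
    rw [le_div_iff₀ (by positivity)] at hα2
    nlinarith
  have hc0 : 0 ≤ 1 / (2 * α) - D := by linarith
  suffices h : ∃ w : Fin d → ℝ, dotR w u = lpnorm q u ∧
      (∀ e : Fin d → ℝ, (∀ i, |e i| ≤ 1) →
        lpnorm p (fun i => (1 / (2 * α) - D) * w i + e i) ≤ 1 / (2 * α)) ∧
      (∑ i, |u i|) ≤ D * lpnorm q u by
    obtain ⟨w, hw, hPq, hl1⟩ := h
    exact quant_aux u (lpnorm q u) hu0 α D hD1 hα1 hα2 (lpnorm p) w hw hPq hl1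
  rcases eq_or_ne p ∞ with rfl | hpt
  · -- p = ∞, q = 1
    have hq : q = 1 := by simpa using hpq
    subst hq
    have hD' : D = 1 := by simp [hD]
    have hnq : lpnorm 1 u = ∑ i, |u i| := by simp [lpnorm]
    refine ⟨fun i => if 0 ≤ u i then 1 else -1, ?_, ?_, ?_⟩
    · rw [dotR, hnq]
      refine Finset.sum_congr rfl fun i _ => ?_
      split_ifs with h
      · rw [one_mul, abs_of_nonneg h]
      · rw [neg_one_mul, abs_of_neg (not_le.mp h)]
    · intro e he
      rw [lpnorm, if_pos rfl]
      apply ciSup_le; intro i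
      calc |(1 / (2 * α) - D) * (if 0 ≤ u i then (1:ℝ) else -1) + e i|
          ≤ |(1 / (2 * α) - D) * (if 0 ≤ u i then (1:ℝ) else -1)| + |e i| := abs_add_le _ _
        _ ≤ (1 / (2 * α) - D) * 1 + 1 := by
            refine add_le_add ?_ (he i)
            rw [abs_mul, abs_of_nonneg hc0]
            refine mul_le_mul_of_nonneg_left ?_ hc0
            split_ifs <;> simp
        _ = 1 / (2 * α) := by rw [hD']; ring
    · rw [hnq, hD', one_mul]
  rcases eq_or_ne p 1 with rfl | hp1
  · -- p = 1, q = ∞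
    have hq : q = ∞ := by
      rw [inv_one] at hpq
      have h2 : (1:ℝ≥0∞) + q⁻¹ = 1 + 0 := by simpa using hpq
      exact ENNReal.inv_eq_zero.mp ((ENNReal.add_right_inj (by simp)).mp h2)
    subst hq
    have hD' : D = (d : ℝ) := by simp [hD]
    have hnq : lpnorm ∞ u = ⨆ i, |u i| := by rw [lpnorm, if_pos rfl]
    obtain ⟨i0, hi0⟩ := Finite.exists_max fun i => |u i|
    have hbdd : BddAbove (Set.range fun i => |u i|) := Set.Finite.bddAbove (Set.finite_range _)
    have hsup : (⨆ i, |u i|) = |u i0| := le_antisymm (ciSup_le hi0) (le_ciSup hbdd i0)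
    set s0 : ℝ := if 0 ≤ u i0 then 1 else -1 with hs0
    have hs0u : s0 * u i0 = |u i0| := by
      rw [hs0]; split_ifs with h
      · rw [one_mul, abs_of_nonneg h]
      · rw [neg_one_mul, abs_of_neg (not_le.mp h)]
    have hs0abs : |s0| = 1 := by rw [hs0]; split_ifs <;> simp
    refine ⟨fun i => if i = i0 then s0 else 0, ?_, ?_, ?_⟩
    · rw [dotR, hnq, hsup]
      have hterm : ∀ i : Fin d, (if i = i0 then s0 else 0) * u i
          = if i = i0 then s0 * u i else 0 := by
        intro i; split_ifs <;> simp
      rw [Finset.sum_congr rfl fun i _ => hterm i,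
        Finset.sum_ite_eq' Finset.univ i0 fun i => s0 * u i]
      simp [hs0u]
    · intro e he
      have h1 : lpnorm 1 (fun i => (1 / (2 * α) - D) * (if i = i0 then s0 else 0) + e i)
          = ∑ i, |(1 / (2 * α) - D) * (if i = i0 then s0 else 0) + e i| := by
        simp [lpnorm]
      rw [h1]
      have hbound : ∀ i, |(1 / (2 * α) - D) * (if i = i0 then s0 else 0) + e i|
          ≤ (if i = i0 then (1 / (2 * α) - D) else 0) + 1 := by
        intro i
        refine (abs_add_le _ _).trans (add_le_add ?_ (he i))
        split_ifs with h
        · rw [abs_mul, hs0abs, mul_one, abs_of_nonneg hc0]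
        · simp
      refine (Finset.sum_le_sum fun i _ => hbound i).trans ?_
      rw [Finset.sum_add_distrib, Finset.sum_ite_eq' Finset.univ i0 fun _ => 1 / (2 * α) - D,
        Finset.sum_const, Finset.card_univ, Fintype.card_fin, nsmul_eq_mul, mul_one]
      simp only [Finset.mem_univ, if_pos]
      rw [hD']; ring_nf; linarith
    · rw [hnq, hsup, hD']
      calc ∑ i, |u i| ≤ ∑ _i : Fin d, |u i0| := Finset.sum_le_sum fun i _ => hi0 i
        _ = (d : ℝ) * |u i0| := by
            rw [Finset.sum_const, Finset.card_univ, Fintype.card_fin, nsmul_eq_mul]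
  · -- generic case 1 < p < ∞
    obtain ⟨hqt, hconj⟩ := conjExponent_of_ennreal hp hp1 hpt hpq
    set pr : ℝ := p.toReal with hpr
    set qr : ℝ := q.toReal with hqr
    have hpr0 : 0 < pr := hconj.pos
    have hqr0 : 0 < qr := hconj.symm.pos
    have hqrpr : (qr - 1) * pr = qr := hconj.symm.sub_one_mul_conj
    have hDeq : D = (d : ℝ) ^ (1 / pr) := by
      rw [hD, one_div, ENNReal.toReal_inv, one_div]
    have hnq : lpnorm q u = (∑ i, |u i| ^ qr) ^ (1 / qr) := by rw [lpnorm, if_neg hqt]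
    set S : ℝ := ∑ i, |u i| ^ qr with hS
    have hS0 : 0 ≤ S :=
      Finset.sum_nonneg fun i _ => Real.rpow_nonneg (abs_nonneg _) _
    set N : ℝ := lpnorm q u with hN
    have hN0 : 0 < N := hu0
    have hNS : N ^ qr = S := by
      rw [hnq, ← Real.rpow_mul hS0, one_div_mul_cancel hqr0.ne', Real.rpow_one]
    have hSpos : 0 < S := by rw [← hNS]; positivity
    set K : ℝ := N ^ (qr - 1) with hK
    have hK0 : 0 < K := Real.rpow_pos_of_pos hN0 _
    set sg : Fin d → ℝ := fun i => if 0 ≤ u i then 1 else -1 with hsg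
    have hsgu : ∀ i, sg i * u i = |u i| := by
      intro i; rw [hsg]; simp only; split_ifs with h
      · rw [one_mul, abs_of_nonneg h]
      · rw [neg_one_mul, abs_of_neg (not_le.mp h)]
    have hsgabs : ∀ i, |sg i| = 1 := by
      intro i; rw [hsg]; simp only; split_ifs <;> simp
    have habs_pow : ∀ i, |u i| * |u i| ^ (qr - 1) = |u i| ^ qr := by
      intro i
      have h7 := Real.rpow_add' (abs_nonneg (u i))
        (show (1:ℝ) + (qr - 1) ≠ 0 by rw [show (1:ℝ) + (qr - 1) = qr by ring]; exact hqr0.ne')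
      rw [Real.rpow_one] at h7
      rw [show (1:ℝ) + (qr - 1) = qr by ring] at h7
      exact h7.symm
    refine ⟨fun i => sg i * |u i| ^ (qr - 1) / K, ?_, ?_, ?_⟩
    · rw [dotR]
      have hterm : ∀ i, sg i * |u i| ^ (qr - 1) / K * u i = |u i| ^ qr / K := by
        intro i
        rw [show sg i * |u i| ^ (qr - 1) / K * u i
            = sg i * u i * |u i| ^ (qr - 1) / K by ring, hsgu i, habs_pow i]
      rw [Finset.sum_congr rfl fun i _ => hterm i, ← Finset.sum_div, ← hS, ← hNS, hK,
        ← Real.rpow_sub hN0, show qr - (qr - 1) = (1:ℝ) by ring, Real.rpow_one]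
    · intro e he
      have hwabs : ∀ i, |sg i * |u i| ^ (qr - 1) / K| ^ pr = |u i| ^ qr / S := by
        intro i
        rw [abs_div, abs_mul, hsgabs i, one_mul,
          abs_of_nonneg (Real.rpow_nonneg (abs_nonneg _) _), abs_of_nonneg hK0.le,
          Real.div_rpow (Real.rpow_nonneg (abs_nonneg _) _) hK0.le,
          ← Real.rpow_mul (abs_nonneg _), hK, ← Real.rpow_mul hN0.le, hqrpr, hNS]
      have hwsum : ∑ i, |sg i * |u i| ^ (qr - 1) / K| ^ pr = 1 := by
        rw [Finset.sum_congr rfl fun i _ => hwabs i, ← Finset.sum_div, ← hS,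
          div_self hSpos.ne']
      have hlp : lpnorm p (fun i => (1 / (2 * α) - D) * (sg i * |u i| ^ (qr - 1) / K) + e i)
          = (∑ i, |(1 / (2 * α) - D) * (sg i * |u i| ^ (qr - 1) / K) + e i| ^ pr) ^ (1 / pr) := by
        rw [lpnorm, if_neg hpt]
      rw [hlp]
      have hmink := Real.Lp_add_le Finset.univ
        (fun i => (1 / (2 * α) - D) * (sg i * |u i| ^ (qr - 1) / K)) e hconj.lt.le
      have hterm1 : (∑ i, |(1 / (2 * α) - D) * (sg i * |u i| ^ (qr - 1) / K)| ^ pr) ^ (1 / pr)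
          = 1 / (2 * α) - D := by
        have h8 : ∀ i, |(1 / (2 * α) - D) * (sg i * |u i| ^ (qr - 1) / K)| ^ pr
            = (1 / (2 * α) - D) ^ pr * |sg i * |u i| ^ (qr - 1) / K| ^ pr := by
          intro i
          rw [abs_mul, abs_of_nonneg hc0, Real.mul_rpow hc0 (abs_nonneg _)]
        rw [Finset.sum_congr rfl fun i _ => h8 i, ← Finset.mul_sum, hwsum, mul_one,
          ← Real.rpow_mul hc0, mul_one_div_cancel hpr0.ne', Real.rpow_one]
      have hterm2 : (∑ i, |e i| ^ pr) ^ (1 / pr) ≤ D := by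
        have h9 : ∑ i, |e i| ^ pr ≤ (d : ℝ) := by
          calc ∑ i, |e i| ^ pr ≤ ∑ _i : Fin d, (1:ℝ) :=
              Finset.sum_le_sum fun i _ => Real.rpow_le_one (abs_nonneg _) (he i) hpr0.le
            _ = (d : ℝ) := by simp
        rw [hDeq]
        exact Real.rpow_le_rpow
          (Finset.sum_nonneg fun i _ => Real.rpow_nonneg (abs_nonneg _) _) h9 (by positivity)
      calc (∑ i, |(1 / (2 * α) - D) * (sg i * |u i| ^ (qr - 1) / K) + e i| ^ pr) ^ (1 / pr)
          ≤ (∑ i, |(1 / (2 * α) - D) * (sg i * |u i| ^ (qr - 1) / K)| ^ pr) ^ (1 / pr)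
            + (∑ i, |e i| ^ pr) ^ (1 / pr) := hmink
        _ ≤ (1 / (2 * α) - D) + D := by rw [hterm1]; exact add_le_add_right hterm2 _
        _ = 1 / (2 * α) := by ring
    · have hones : (∑ _i : Fin d, (1:ℝ)) = (d : ℝ) := by simp
      have hhold := Real.inner_le_Lp_mul_Lq Finset.univ (fun _ => (1:ℝ)) (fun i => |u i|) hconj
      simp only [one_mul, abs_one, Real.one_rpow, abs_abs] at hhold
      rw [hones] at hhold
      calc ∑ i, |u i| ≤ (d : ℝ) ^ (1 / pr) * (∑ i, |u i| ^ qr) ^ (1 / qr) := hhold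
        _ = D * lpnorm q u := by rw [← hS, ← hnq, hN, hDeq]


end NF
end
end
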